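/- Let G be an LLT graph containing three vertices i < j < j+1 such that: (i,j) is a double edge, (j, j+1) is a double edge, (i, j+1) is a type I edge (and the edge-relations of j and j+1 to all vertices v > j+1 coincide type-by-type; there are no other edges among i, j, j+1 beyond those stated plus the common outside relations). Let G' be the graph obtained by replacing the double edge (i,j) with a type I edge (i,j) and deleting the type I edge (i,j+1). Then LLT(G) = q·LLT(G'), as formal power series with coefficients in ℤ[q]. -/

import Mathlib

open scoped Classical

noncomputable section

/-- An LLT graph: a directed graph with three types of edges
(type I, type II, and double edges). -/
structure LLTGraph (V : Type*) where
  E1 : Finset (V × V)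
  E2 : Finset (V × V)
  Ed : Finset (V × V)

/-- The weight `∏ φ_f(u,v)` of a coloring `f : V → ℤ_{>0}`:
type I edges impose `f u > f v`, type II edges impose `f u ≥ f v`,
and double edges contribute `q` if `f u > f v` and `1` if `f u ≤ f v`
(the variable `q` is `Polynomial.X`). -/
noncomputable def lltWeight {V : Type*} (G : LLTGraph V) (f : V → ℕ+) : Polynomial ℤ :=
  (∏ e ∈ G.E1, if f e.2 < f e.1 then 1 else 0) *
  (∏ e ∈ G.E2, if f e.2 ≤ f e.1 then 1 else 0) *
  (∏ e ∈ G.Ed, if f e.2 < f e.1 then Polynomial.X else 1)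

/-- The LLT polynomial of an LLT graph, as a formal power series in the
variables `x_1, x_2, ...` (indexed by `ℕ+`): the coefficient of a monomial `d`
is the sum of the weights of all colorings `f` whose monomial `∏ v, x_{f v}` is `d`. -/
noncomputable def LLT {V : Type*} [Fintype V] (G : LLTGraph V) :
    MvPowerSeries ℕ+ (Polynomial ℤ) :=
  fun d => ∑ᶠ f : V → ℕ+,
    if (∑ v : V, Finsupp.single (f v) 1) = d then lltWeight G f else 0

lemma key_nat (x y z : ℕ) (R : Polynomial ℤ) :
    ((if z < x then (1 : Polynomial ℤ) else 0) *
        ((if y < x then (Polynomial.X : Polynomial ℤ) else 1) *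
          (if z < y then (Polynomial.X : Polynomial ℤ) else 1))) * R +
      ((if y < x then (1 : Polynomial ℤ) else 0) *
        ((if z < x then (Polynomial.X : Polynomial ℤ) else 1) *
          (if y < z then (Polynomial.X : Polynomial ℤ) else 1))) * R =
    Polynomial.X * (((if y < x then (1 : Polynomial ℤ) else 0) *
        (if z < y then (Polynomial.X : Polynomial ℤ) else 1)) * R) +
      Polynomial.X * (((if z < x then (1 : Polynomial ℤ) else 0) *
        (if y < z then (Polynomial.X : Polynomial ℤ) else 1)) * R) := by
  split_ifs <;> first | ring1 | (exfalso; omega)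

lemma key_pnat (x y z : ℕ+) (R : Polynomial ℤ) :
    ((if z < x then (1 : Polynomial ℤ) else 0) *
        ((if y < x then (Polynomial.X : Polynomial ℤ) else 1) *
          (if z < y then (Polynomial.X : Polynomial ℤ) else 1))) * R +
      ((if y < x then (1 : Polynomial ℤ) else 0) *
        ((if z < x then (Polynomial.X : Polynomial ℤ) else 1) *
          (if y < z then (Polynomial.X : Polynomial ℤ) else 1))) * R =
    Polynomial.X * (((if y < x then (1 : Polynomial ℤ) else 0) *
        (if z < y then (Polynomial.X : Polynomial ℤ) else 1)) * R) +
      Polynomial.X * (((if z < x then (1 : Polynomial ℤ) else 0) *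
        (if y < z then (Polynomial.X : Polynomial ℤ) else 1)) * R) := by
  have h := key_nat (x : ℕ) (y : ℕ) (z : ℕ) R
  simpa only [PNat.coe_lt_coe] using h

lemma finite_cond {V : Type*} [Fintype V] (d : ℕ+ →₀ ℕ) :
    {f : V → ℕ+ | (∑ v : V, Finsupp.single (f v) 1) = d}.Finite := by
  apply Set.Finite.subset (Set.Finite.pi' (t := fun _ : V => (↑d.support : Set ℕ+))
    (fun _ => d.support.finite_toSet))
  intro f hf
  simp only [Set.mem_setOf_eq] at hf ⊢
  intro v
  have h : (0 : ℕ) < (∑ u : V, Finsupp.single (f u) 1) (f v) := by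
    rw [Finset.sum_apply']
    refine lt_of_lt_of_le ?_ (Finset.single_le_sum
      (f := fun u => (Finsupp.single (f u) 1 : ℕ+ →₀ ℕ) (f v))
      (fun u _ => Nat.zero_le _) (Finset.mem_univ v))
    simp
  rw [hf] at h
  exact Finset.mem_coe.2 (Finsupp.mem_support_iff.2 (by omega))

/-- The local triangle relation used in Schröder path relation (B): if `a, b, c`
(playing the roles of `i < j < j+1`) are distinct vertices of an LLT graph `G` with
double edges `(a,b)` and `(b,c)`, a type I edge `(a,c)`, no other edges among
`{a,b,c}`, and `b` and `c` have identical edge-relations (type by type) to every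
vertex outside `{a,b,c}`, then `LLT(G) = q·LLT(G')`, where `G'` is obtained by
replacing the double edge `(a,b)` with a type I edge `(a,b)` and deleting the
type I edge `(a,c)`. -/
theorem LLT_triangle_relation {V : Type*} [Fintype V] [DecidableEq V] (G : LLTGraph V)
    (a b c : V) (hab : a ≠ b) (hbc : b ≠ c) (hac : a ≠ c)
    (h1 : (a, b) ∈ G.Ed) (h2 : (b, c) ∈ G.Ed) (h3 : (a, c) ∈ G.E1)
    (honlyE1 : ∀ u w : V, u ∈ ({a, b, c} : Set V) → w ∈ ({a, b, c} : Set V) →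
      (u, w) ∈ G.E1 → (u, w) = (a, c))
    (honlyE2 : ∀ u w : V, u ∈ ({a, b, c} : Set V) → w ∈ ({a, b, c} : Set V) →
      (u, w) ∉ G.E2)
    (honlyEd : ∀ u w : V, u ∈ ({a, b, c} : Set V) → w ∈ ({a, b, c} : Set V) →
      (u, w) ∈ G.Ed → (u, w) = (a, b) ∨ (u, w) = (b, c))
    (hsym : ∀ v : V, v ∉ ({a, b, c} : Set V) →
      (((b, v) ∈ G.E1 ↔ (c, v) ∈ G.E1) ∧ ((v, b) ∈ G.E1 ↔ (v, c) ∈ G.E1) ∧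
       ((b, v) ∈ G.E2 ↔ (c, v) ∈ G.E2) ∧ ((v, b) ∈ G.E2 ↔ (v, c) ∈ G.E2) ∧
       ((b, v) ∈ G.Ed ↔ (c, v) ∈ G.Ed) ∧ ((v, b) ∈ G.Ed ↔ (v, c) ∈ G.Ed))) :
    LLT G =
      MvPowerSeries.C (σ := ℕ+) (R := Polynomial ℤ) Polynomial.X *
        LLT (⟨insert (a, b) (G.E1.erase (a, c)), G.E2, G.Ed.erase (a, b)⟩ :
          LLTGraph V) := by
  classical
  set G' : LLTGraph V := ⟨insert (a, b) (G.E1.erase (a, c)), G.E2, G.Ed.erase (a, b)⟩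
    with hG'def
  set e : V ≃ V := Equiv.swap b c with he
  have hea : e a = a := Equiv.swap_apply_of_ne_of_ne hab hac
  have heb : e b = c := Equiv.swap_apply_left b c
  have hec : e c = b := Equiv.swap_apply_right b c
  -- stability of edge sets under the swap
  have stable : ∀ S : Finset (V × V),
      (∀ u w : V, (u = a ∨ u = b ∨ u = c) → (w = a ∨ w = b ∨ w = c) → (u, w) ∉ S) →
      (∀ v : V, ¬(v = a ∨ v = b ∨ v = c) →
        (((b, v) ∈ S ↔ (c, v) ∈ S) ∧ ((v, b) ∈ S ↔ (v, c) ∈ S))) →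
      ∀ p ∈ S, (e p.1, e p.2) ∈ S := by
    intro S hnot hs p hp
    obtain ⟨u, w⟩ := p
    by_cases hu : u = a ∨ u = b ∨ u = c <;> by_cases hw : w = a ∨ w = b ∨ w = c
    · exact absurd hp (hnot u w hu hw)
    · push_neg at hw
      have hew : e w = w := Equiv.swap_apply_of_ne_of_ne hw.2.1 hw.2.2
      rcases hu with rfl | rfl | rfl
      · simpa [hea, hew] using hp
      · simp only [heb, hew]
        exact ((hs w (by push_neg; exact hw)).1).mp hp
      · simp only [hec, hew]
        exact ((hs w (by push_neg; exact hw)).1).mpr hp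
    · push_neg at hu
      have heu : e u = u := Equiv.swap_apply_of_ne_of_ne hu.2.1 hu.2.2
      rcases hw with rfl | rfl | rfl
      · simpa [hea, heu] using hp
      · simp only [heb, heu]
        exact ((hs u (by push_neg; exact hu)).2).mp hp
      · simp only [hec, heu]
        exact ((hs u (by push_neg; exact hu)).2).mpr hp
    · push_neg at hu hw
      have heu : e u = u := Equiv.swap_apply_of_ne_of_ne hu.2.1 hu.2.2
      have hew : e w = w := Equiv.swap_apply_of_ne_of_ne hw.2.1 hw.2.2
      simpa [heu, hew] using hp
  have memtri : ∀ v : V, (v = a ∨ v = b ∨ v = c) → v ∈ ({a, b, c} : Set V) := by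
    intro v hv; simpa using hv
  have memtri' : ∀ v : V, ¬(v = a ∨ v = b ∨ v = c) → v ∉ ({a, b, c} : Set V) := by
    intro v hv h; exact hv (by simpa using h)
  have hτ1 : ∀ p ∈ G.E1.erase (a, c), (e p.1, e p.2) ∈ G.E1.erase (a, c) := by
    refine stable _ ?_ ?_
    · intro u w hu hw hmem
      rw [Finset.mem_erase] at hmem
      exact hmem.1 (honlyE1 u w (memtri u hu) (memtri w hw) hmem.2)
    · intro v hv
      have hv' := memtri' v hv
      push_neg at hv
      constructor
      · rw [Finset.mem_erase, Finset.mem_erase]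
        have h1 : ((b, v) : V × V) ≠ (a, c) := by
          intro h; exact hab (congrArg Prod.fst h).symm
        have h2 : ((c, v) : V × V) ≠ (a, c) := by
          intro h; exact hac (congrArg Prod.fst h).symm
        simp only [h1, h2, true_and, ne_eq, not_false_eq_true]
        exact (hsym v hv').1
      · rw [Finset.mem_erase, Finset.mem_erase]
        have h1 : ((v, b) : V × V) ≠ (a, c) := by
          intro h; exact hv.1 (congrArg Prod.fst h)
        have h2 : ((v, c) : V × V) ≠ (a, c) := by
          intro h; exact hv.1 (congrArg Prod.fst h)
        simp only [h1, h2, true_and, ne_eq, not_false_eq_true]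
        exact (hsym v hv').2.1
  have hτ2 : ∀ p ∈ G.E2, (e p.1, e p.2) ∈ G.E2 := by
    refine stable _ ?_ ?_
    · intro u w hu hw hmem
      exact honlyE2 u w (memtri u hu) (memtri w hw) hmem
    · intro v hv
      have hv' := memtri' v hv
      exact ⟨(hsym v hv').2.2.1, (hsym v hv').2.2.2.1⟩
  have hτd : ∀ p ∈ (G.Ed.erase (a, b)).erase (b, c),
      (e p.1, e p.2) ∈ (G.Ed.erase (a, b)).erase (b, c) := by
    refine stable _ ?_ ?_
    · intro u w hu hw hmem
      rw [Finset.mem_erase, Finset.mem_erase] at hmem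
      rcases honlyEd u w (memtri u hu) (memtri w hw) hmem.2.2 with h | h
      · exact hmem.2.1 h
      · exact hmem.1 h
    · intro v hv
      have hv' := memtri' v hv
      push_neg at hv
      constructor
      · rw [Finset.mem_erase, Finset.mem_erase, Finset.mem_erase, Finset.mem_erase]
        have e1 : ((b, v) : V × V) ≠ (b, c) := by
          intro h; exact hv.2.2 (congrArg Prod.snd h)
        have e2 : ((b, v) : V × V) ≠ (a, b) := by
          intro h; exact hab (congrArg Prod.fst h).symm
        have e3 : ((c, v) : V × V) ≠ (b, c) := by
          intro h; exact hbc (congrArg Prod.fst h).symm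
        have e4 : ((c, v) : V × V) ≠ (a, b) := by
          intro h; exact hac (congrArg Prod.fst h).symm
        simp only [e1, e2, e3, e4, true_and, ne_eq, not_false_eq_true]
        exact (hsym v hv').2.2.2.2.1
      · rw [Finset.mem_erase, Finset.mem_erase, Finset.mem_erase, Finset.mem_erase]
        have e1 : ((v, b) : V × V) ≠ (b, c) := by
          intro h; exact hv.2.1 (congrArg Prod.fst h)
        have e2 : ((v, b) : V × V) ≠ (a, b) := by
          intro h; exact hv.1 (congrArg Prod.fst h)
        have e3 : ((v, c) : V × V) ≠ (b, c) := by
          intro h; exact hv.2.1 (congrArg Prod.fst h)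
        have e4 : ((v, c) : V × V) ≠ (a, b) := by
          intro h; exact hv.1 (congrArg Prod.fst h)
        simp only [e1, e2, e3, e4, true_and, ne_eq, not_false_eq_true]
        exact (hsym v hv').2.2.2.2.2
  -- product invariance under the swap
  have prodinv : ∀ (S : Finset (V × V)), (∀ p ∈ S, (e p.1, e p.2) ∈ S) →
      ∀ (f : V → ℕ+) (g : ℕ+ → ℕ+ → Polynomial ℤ),
      (∏ x ∈ S, g (f (e x.1)) (f (e x.2))) = ∏ x ∈ S, g (f x.1) (f x.2) := by
    intro S hS f g
    refine Finset.prod_nbij' (fun x => (e x.1, e x.2)) (fun x => (e x.1, e x.2))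
      hS hS ?_ ?_ ?_
    · intro x hx
      simp [he, Prod.ext_iff]
    · intro x hx
      simp [he, Prod.ext_iff]
    · intro x hx; rfl
  -- membership facts
  have hbc_mem : ((b, c) : V × V) ∈ G.Ed.erase (a, b) := by
    refine Finset.mem_erase.2 ⟨?_, h2⟩
    intro h; exact hab (congrArg Prod.fst h).symm
  have habE1' : ((a, b) : V × V) ∉ G.E1.erase (a, c) := by
    intro h
    have := honlyE1 a b (by simp) (by simp) (Finset.mem_erase.1 h).2
    exact hbc (congrArg Prod.snd this)
  -- weight factorizations
  have hwG : ∀ f : V → ℕ+, lltWeight G f =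
      ((if f c < f a then (1 : Polynomial ℤ) else 0) *
        ((if f b < f a then (Polynomial.X : Polynomial ℤ) else 1) *
          (if f c < f b then (Polynomial.X : Polynomial ℤ) else 1))) *
      ((∏ x ∈ G.E1.erase (a, c), if f x.2 < f x.1 then (1 : Polynomial ℤ) else 0) *
       (∏ x ∈ G.E2, if f x.2 ≤ f x.1 then (1 : Polynomial ℤ) else 0) *
       (∏ x ∈ (G.Ed.erase (a, b)).erase (b, c),
          if f x.2 < f x.1 then (Polynomial.X : Polynomial ℤ) else 1)) := by
    intro f
    unfold lltWeight
    rw [← Finset.mul_prod_erase _ _ h3, ← Finset.mul_prod_erase _ _ h1,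
      ← Finset.mul_prod_erase _ _ hbc_mem]
    ring
  have hwG' : ∀ f : V → ℕ+, lltWeight G' f =
      ((if f b < f a then (1 : Polynomial ℤ) else 0) *
        (if f c < f b then (Polynomial.X : Polynomial ℤ) else 1)) *
      ((∏ x ∈ G.E1.erase (a, c), if f x.2 < f x.1 then (1 : Polynomial ℤ) else 0) *
       (∏ x ∈ G.E2, if f x.2 ≤ f x.1 then (1 : Polynomial ℤ) else 0) *
       (∏ x ∈ (G.Ed.erase (a, b)).erase (b, c),
          if f x.2 < f x.1 then (Polynomial.X : Polynomial ℤ) else 1)) := by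
    intro f
    show (∏ x ∈ insert (a, b) (G.E1.erase (a, c)),
        if f x.2 < f x.1 then (1 : Polynomial ℤ) else 0) *
      (∏ x ∈ G.E2, if f x.2 ≤ f x.1 then (1 : Polynomial ℤ) else 0) *
      (∏ x ∈ G.Ed.erase (a, b),
        if f x.2 < f x.1 then (Polynomial.X : Polynomial ℤ) else 1) = _
    rw [Finset.prod_insert habE1', ← Finset.mul_prod_erase _ _ hbc_mem]
    ring
  -- the pointwise (paired) identity for weights
  have hkey : ∀ f : V → ℕ+,
      lltWeight G f + lltWeight G (fun v => f (e v)) =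
        Polynomial.X * lltWeight G' f + Polynomial.X * lltWeight G' (fun v => f (e v)) := by
    intro f
    rw [hwG f, hwG (fun v => f (e v)), hwG' f, hwG' (fun v => f (e v))]
    simp only [hea, heb, hec]
    rw [prodinv _ hτ1 f (fun u v => if v < u then (1 : Polynomial ℤ) else 0),
      prodinv _ hτ2 f (fun u v => if v ≤ u then (1 : Polynomial ℤ) else 0),
      prodinv _ hτd f (fun u v => if v < u then (Polynomial.X : Polynomial ℤ) else 1)]
    exact key_pnat (f a) (f b) (f c) _
  -- the coloring swap as an equivalence
  set σe : (V → ℕ+) ≃ (V → ℕ+) :=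
    { toFun := fun f v => f (e v)
      invFun := fun f v => f (e v)
      left_inv := fun f => by funext v; simp [he]
      right_inv := fun f => by funext v; simp [he] } with hσe
  -- monomial invariance
  have hmono : ∀ f : V → ℕ+,
      (∑ v : V, Finsupp.single (f (e v)) 1) = ∑ v : V, Finsupp.single (f v) 1 :=
    fun f => Fintype.sum_equiv e _ _ (fun v => rfl)
  -- now the coefficientwise statement
  funext d
  have hrhs : (MvPowerSeries.C (σ := ℕ+) (R := Polynomial ℤ) Polynomial.X * LLT G') d
      = Polynomial.X * (LLT G') d := MvPowerSeries.coeff_C_mul d (LLT G') Polynomial.X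
  show LLT G d = _
  rw [hrhs]
  show (∑ᶠ f : V → ℕ+,
      if (∑ v : V, Finsupp.single (f v) 1) = d then lltWeight G f else 0) =
    Polynomial.X * ∑ᶠ f : V → ℕ+,
      if (∑ v : V, Finsupp.single (f v) 1) = d then lltWeight G' f else 0
  set F : (V → ℕ+) → Polynomial ℤ := fun f =>
    if (∑ v : V, Finsupp.single (f v) 1) = d then lltWeight G f else 0 with hF
  set F' : (V → ℕ+) → Polynomial ℤ := fun f =>
    if (∑ v : V, Finsupp.single (f v) 1) = d then lltWeight G' f else 0 with hF'
  set H : (V → ℕ+) → Polynomial ℤ := fun f =>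
    if (∑ v : V, Finsupp.single (f v) 1) = d then Polynomial.X * lltWeight G' f else 0
    with hH
  have hfinS := finite_cond (V := V) d
  have hsupp : ∀ (W : (V → ℕ+) → Polynomial ℤ),
      (∀ f, (∑ v : V, Finsupp.single (f v) 1) ≠ d → W f = 0) →
      (Function.support W).Finite := by
    intro W hW
    apply hfinS.subset
    intro f hf
    simp only [Function.mem_support] at hf
    by_contra hcond
    exact hf (hW f hcond)
  have hFfin : (Function.support F).Finite :=
    hsupp F (fun f hf => by simp [hF, hf])
  have hF'fin : (Function.support F').Finite :=
    hsupp F' (fun f hf => by simp [hF', hf])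
  have hHfin : (Function.support H).Finite :=
    hsupp H (fun f hf => by simp [hH, hf])
  have hFσfin : (Function.support fun f => F (σe f)).Finite := by
    apply hsupp
    intro f hf
    have : (∑ v : V, Finsupp.single ((σe f) v) 1) ≠ d := by
      show (∑ v : V, Finsupp.single (f (e v)) 1) ≠ d
      rw [hmono f]; exact hf
    simp [hF, this]
  have hHσfin : (Function.support fun f => H (σe f)).Finite := by
    apply hsupp
    intro f hf
    have : (∑ v : V, Finsupp.single ((σe f) v) 1) ≠ d := by
      show (∑ v : V, Finsupp.single (f (e v)) 1) ≠ d
      rw [hmono f]; exact hf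
    simp [hH, this]
  -- pairing identity for F and H
  have key2 : ∀ f, F f + F (σe f) = H f + H (σe f) := by
    intro f
    have hcs : (∑ v : V, Finsupp.single ((σe f) v) 1) = ∑ v : V, Finsupp.single (f v) 1 :=
      hmono f
    by_cases hc : (∑ v : V, Finsupp.single (f v) 1) = d
    · have hc' : (∑ v : V, Finsupp.single ((σe f) v) 1) = d := by rw [hcs]; exact hc
      simp only [hF, hH, if_pos hc, if_pos hc']
      exact hkey f
    · have hc' : ¬(∑ v : V, Finsupp.single ((σe f) v) 1) = d := by rw [hcs]; exact hc
      simp only [hF, hH, if_neg hc, if_neg hc', add_zero]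
  -- sum over pairs
  have hsum : ∑ᶠ f, F f = ∑ᶠ f, H f := by
    have h1 : ∑ᶠ f, (F f + F (σe f)) = ∑ᶠ f, (H f + H (σe f)) :=
      finsum_congr key2
    rw [finsum_add_distrib hFfin hFσfin, finsum_add_distrib hHfin hHσfin] at h1
    rw [finsum_comp_equiv σe (f := F), finsum_comp_equiv σe (f := H)] at h1
    rw [← two_mul, ← two_mul] at h1
    exact mul_left_cancel₀ two_ne_zero h1
  rw [hsum, mul_finsum F' Polynomial.X]
  apply finsum_congr
  intro f
  simp only [hH, hF', mul_ite, mul_zero]
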